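/- Let W' be the affine Weyl group of type B̃₂ with simple reflections r, s, t satisfying rt = tr, (rs)⁴ = e, (st)⁴ = e, and r² = s² = t² = e. Then for every m ≥ 0 the element rt(srt)^m has length 3m + 2. -/

import Mathlib

/-- The Coxeter matrix of affine type B̃₂ on generators `r = 0`, `s = 1`, `t = 2`,
with `m(r,t) = 2`, `m(r,s) = 4`, `m(s,t) = 4`. -/
def B2affMatrix : CoxeterMatrix (Fin 3) where
  M := !![1, 4, 2; 4, 1, 4; 2, 4, 1]
  off_diagonal := by
    intro i i' h
    fin_cases i <;> fin_cases i' <;> first | exact absurd rfl h | decide | simp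

/-- The affine Weyl group of type B̃₂. -/
abbrev B2affGroup := B2affMatrix.Group

/-- The canonical Coxeter system on the affine Weyl group of type B̃₂. -/
def B2affCS : CoxeterSystem B2affMatrix B2affGroup := B2affMatrix.toCoxeterSystem

namespace B2aff

/-- The simple reflection `r`. -/
def r : B2affGroup := B2affCS.simple 0
/-- The simple reflection `s`. -/
def s : B2affGroup := B2affCS.simple 1
/-- The simple reflection `t`. -/
def t : B2affGroup := B2affCS.simple 2

end B2aff

namespace B2affAux

/-- The affine reflection `x₁ ↦ -x₁` (coordinates scaled by 4). -/
def pR : Equiv.Perm (ℤ × ℤ) := Function.Involutive.toPerm (fun p => (-p.1, p.2)) (show Function.Involutive (fun p : ℤ × ℤ => (-p.1, p.2)) by intro p; simp)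
/-- The affine reflection across the diagonal `x₁ = x₂`. -/
def pS : Equiv.Perm (ℤ × ℤ) := Function.Involutive.toPerm (fun p => (p.2, p.1)) (show Function.Involutive (fun p : ℤ × ℤ => (p.2, p.1)) by intro p; simp)
/-- The affine reflection `x₂ ↦ 2 - x₂` (coordinates scaled by 4). -/
def pT : Equiv.Perm (ℤ × ℤ) := Function.Involutive.toPerm (fun p => (p.1, 8 - p.2)) (show Function.Involutive (fun p : ℤ × ℤ => (p.1, 8 - p.2)) by intro p; simp)

def f : Fin 3 → Equiv.Perm (ℤ × ℤ) := ![pR, pS, pT]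

lemma liftable : B2affMatrix.IsLiftable f := by
  intro i j
  fin_cases i <;> fin_cases j <;>
    · ext p <;>
      simp [B2affMatrix, f, pR, pS, pT, pow_succ, Equiv.Perm.mul_apply,
        Function.Involutive.coe_toPerm]

/-- The affine action of the Coxeter group on (4 times) the integer points. -/
def φ : B2affGroup →* Equiv.Perm (ℤ × ℤ) := B2affCS.lift ⟨f, liftable⟩

lemma φ_simple (i : Fin 3) : φ (B2affCS.simple i) = f i :=
  B2affCS.lift_apply_simple liftable i

/-- The number of reflection hyperplanes separating the point `p/4` from the base
point `(1/4, 1/2)`. -/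
def N (p : ℤ × ℤ) : ℕ :=
  (p.1 / 4).natAbs + (p.2 / 4).natAbs + ((p.1 + p.2) / 8).natAbs + ((p.1 - p.2) / 8 + 1).natAbs

/-- The point avoids all reflection hyperplanes. -/
def P (p : ℤ × ℤ) : Prop :=
  ¬ (4 ∣ p.1) ∧ ¬ (4 ∣ p.2) ∧ ¬ (8 ∣ p.1 + p.2) ∧ ¬ (8 ∣ p.1 - p.2)

lemma stepR (x y : ℤ) (hp : P (x, y)) : P (pR (x, y)) ∧ N (pR (x, y)) ≤ N (x, y) + 1 := by
  obtain ⟨h1, h2, h3, h4⟩ := hp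
  simp only [pR, Function.Involutive.coe_toPerm, P, N] at *
  have e1 : (-x) / 4 = -(x / 4) - 1 := by omega
  have e2 : (-x + y) / 8 = -((x - y) / 8) - 1 := by omega
  have e3 : (-x - y) / 8 = -((x + y) / 8) - 1 := by omega
  refine ⟨⟨by omega, h2, by omega, by omega⟩, ?_⟩
  rw [e1, e2, e3]
  generalize x / 4 = a
  generalize y / 4 = b
  generalize (x + y) / 8 = c
  generalize (x - y) / 8 = d
  omega

lemma stepS (x y : ℤ) (hp : P (x, y)) : P (pS (x, y)) ∧ N (pS (x, y)) ≤ N (x, y) + 1 := by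
  obtain ⟨h1, h2, h3, h4⟩ := hp
  simp only [pS, Function.Involutive.coe_toPerm, P, N] at *
  have e1 : (y + x) / 8 = (x + y) / 8 := by rw [add_comm]
  have e2 : (y - x) / 8 = -((x - y) / 8) - 1 := by omega
  refine ⟨⟨h2, h1, by omega, by omega⟩, ?_⟩
  rw [e1, e2]
  generalize x / 4 = a
  generalize y / 4 = b
  generalize (x + y) / 8 = c
  generalize (x - y) / 8 = d
  omega

lemma stepT (x y : ℤ) (hp : P (x, y)) : P (pT (x, y)) ∧ N (pT (x, y)) ≤ N (x, y) + 1 := by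
  obtain ⟨h1, h2, h3, h4⟩ := hp
  simp only [pT, Function.Involutive.coe_toPerm, P, N] at *
  have e1 : (8 - y) / 4 = 1 - y / 4 := by omega
  have e2 : (x + (8 - y)) / 8 = (x - y) / 8 + 1 := by omega
  have e3 : (x - (8 - y)) / 8 = (x + y) / 8 - 1 := by omega
  refine ⟨⟨h1, by omega, by omega, by omega⟩, ?_⟩
  rw [e1, e2, e3]
  generalize x / 4 = a
  generalize y / 4 = b
  generalize (x + y) / 8 = c
  generalize (x - y) / 8 = d
  omega

lemma step (i : Fin 3) (p : ℤ × ℤ) (hp : P p) :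
    P (f i p) ∧ N (f i p) ≤ N p + 1 := by
  obtain ⟨x, y⟩ := p
  fin_cases i
  · exact stepR x y hp
  · exact stepS x y hp
  · exact stepT x y hp

lemma key (ω : List (Fin 3)) (p : ℤ × ℤ) (hp : P p) :
    P (φ (B2affCS.wordProd ω) p) ∧ N (φ (B2affCS.wordProd ω) p) ≤ N p + ω.length := by
  induction ω with
  | nil => simpa using hp
  | cons i ω ih =>
    rw [CoxeterSystem.wordProd_cons, map_mul, Equiv.Perm.mul_apply]
    obtain ⟨hP, hN⟩ := ih
    obtain ⟨hP', hN'⟩ := step i _ hP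
    rw [φ_simple]
    exact ⟨hP', by simpa using hN'.trans (by omega)⟩

/-- Lower bound on the length from the affine action. -/
lemma length_ge (w : B2affGroup) (p : ℤ × ℤ) (hp : P p) :
    N (φ w p) ≤ N p + B2affCS.length w := by
  obtain ⟨ω, hlen, hw⟩ := B2affCS.exists_reduced_word w
  subst hw
  simpa [← hlen.eq] using (key ω p hp).2

open B2aff

lemma pt_eq (m : ℕ) :
    φ ((s * r * t) ^ m) (1, 2) =
      (if m % 2 = 0 then ((1 + 4 * (m : ℤ), 2 - 4 * (m : ℤ)) : ℤ × ℤ)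
        else (2 + 4 * (m : ℤ), 3 - 4 * (m : ℤ))) := by
  induction m with
  | zero => simp
  | succ m ih =>
    rw [pow_succ', map_mul, Equiv.Perm.mul_apply, ih]
    have : φ (s * r * t) = φ s * φ r * φ t := by simp [map_mul]
    rw [this]
    simp only [r, s, t, φ_simple]
    rcases Nat.even_or_odd m with hm | hm
    · have h0 : m % 2 = 0 := Nat.even_iff.mp hm
      have h1 : (m + 1) % 2 = 1 := by omega
      rw [h0, h1]
      simp only [if_pos rfl, if_neg one_ne_zero]
      simp [f, pR, pS, pT, Equiv.Perm.mul_apply, Function.Involutive.coe_toPerm, Prod.ext_iff]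
      push_cast
      constructor <;> ring
    · have h0 : m % 2 = 1 := Nat.odd_iff.mp hm
      have h1 : (m + 1) % 2 = 0 := by omega
      rw [h0, h1]
      simp only [if_pos rfl, if_neg one_ne_zero]
      simp [f, pR, pS, pT, Equiv.Perm.mul_apply, Function.Involutive.coe_toPerm, Prod.ext_iff]
      push_cast
      constructor <;> ring

end B2affAux

open B2aff B2affAux in
/-- For every `m ≥ 0`, the element `rt(srt)^m` of the affine Weyl group of type `B̃₂`
has Coxeter length `3m + 2`. -/
theorem length_rt_srt_pow (m : ℕ) :
    B2affCS.length (r * t * (s * r * t) ^ m) = 3 * m + 2 := by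
  -- upper bound
  have hsrt : B2affCS.length (s * r * t) ≤ 3 := by
    calc B2affCS.length (s * r * t) ≤ B2affCS.length (s * r) + B2affCS.length t :=
          B2affCS.length_mul_le _ _
      _ ≤ B2affCS.length s + B2affCS.length r + B2affCS.length t :=
          Nat.add_le_add_right (B2affCS.length_mul_le _ _) _
      _ ≤ 3 := by simp [r, s, t, B2affCS.length_simple]
  have hpow : ∀ k : ℕ, B2affCS.length ((s * r * t) ^ k) ≤ 3 * k := by
    intro k
    induction k with
    | zero => simp
    | succ k ih =>
      calc B2affCS.length ((s * r * t) ^ (k + 1))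
          = B2affCS.length ((s * r * t) ^ k * (s * r * t)) := by rw [pow_succ]
        _ ≤ B2affCS.length ((s * r * t) ^ k) + B2affCS.length (s * r * t) :=
            B2affCS.length_mul_le _ _
        _ ≤ 3 * k + 3 := Nat.add_le_add ih hsrt
        _ = 3 * (k + 1) := by ring
  have hub : B2affCS.length (r * t * (s * r * t) ^ m) ≤ 3 * m + 2 := by
    calc B2affCS.length (r * t * (s * r * t) ^ m)
        ≤ B2affCS.length (r * t) + B2affCS.length ((s * r * t) ^ m) :=
          B2affCS.length_mul_le _ _
      _ ≤ (B2affCS.length r + B2affCS.length t) + 3 * m :=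
          Nat.add_le_add (B2affCS.length_mul_le _ _) (hpow m)
      _ ≤ 3 * m + 2 := by simp [r, t, B2affCS.length_simple]; omega
  -- lower bound
  have hp0 : P (1, 2) := by refine ⟨?_, ?_, ?_, ?_⟩ <;> decide
  have hlb := length_ge (r * t * (s * r * t) ^ m) (1, 2) hp0
  have hval : N (φ (r * t * (s * r * t) ^ m) (1, 2)) = 3 * m + 2 := by
    rw [map_mul, Equiv.Perm.mul_apply, pt_eq m, map_mul, Equiv.Perm.mul_apply]
    simp only [r, t, φ_simple]
    rcases Nat.even_or_odd m with hm | hm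
    · have h0 : m % 2 = 0 := Nat.even_iff.mp hm
      rw [if_pos h0]
      simp only [f, Matrix.cons_val_zero, Matrix.cons_val_two, Matrix.tail_cons, Matrix.head_cons,
        pR, pT, Function.Involutive.coe_toPerm, N]
      omega
    · have h0 : m % 2 = 1 := Nat.odd_iff.mp hm
      rw [if_neg (by omega)]
      simp only [f, Matrix.cons_val_zero, Matrix.cons_val_two, Matrix.tail_cons, Matrix.head_cons,
        pR, pT, Function.Involutive.coe_toPerm, N]
      omega
  have hNp0 : N (1, 2) = 0 := by decide
  rw [hval, hNp0] at hlb
  omega
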